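/- Let V be a finite-dimensional real vector space and let A and E be symmetric bilinear forms on V. Then Q(A,E) = 0 (i.e. Q(A,E)(X₁,X₂;X,Y) = 0 for all X₁,X₂,X,Y ∈ V) if and only if A and E are linearly dependent. -/

import Mathlib

/- Pointwise algebraic operations used for pseudosymmetry-type curvature conditions. -/
namespace WPS

variable {V : Type} [AddCommGroup V] [Module ℝ V]

/-- The endomorphism `X ∧_A Y` given by `(X ∧_A Y) Z = A(Y,Z) X - A(X,Z) Y`. -/
def wedge (A : V → V → ℝ) (X Y Z : V) : V := A Y Z • X - A X Z • Y

/-- `(D · H)(X₁,X₂,X₃,X₄; X,Y)` for a (0,4)-tensor `H`, where `Dop X Y` is the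
curvature operator `𝒟(X,Y)` of `D`. -/
def dot4 (Dop : V → V → V → V) (H : V → V → V → V → ℝ)
    (X1 X2 X3 X4 X Y : V) : ℝ :=
  -H (Dop X Y X1) X2 X3 X4 - H X1 (Dop X Y X2) X3 X4
    - H X1 X2 (Dop X Y X3) X4 - H X1 X2 X3 (Dop X Y X4)

/-- `(D · H)(X₁,X₂; X,Y)` for a (0,2)-tensor `H`. -/
def dot2 (Dop : V → V → V → V) (H : V → V → ℝ) (X1 X2 X Y : V) : ℝ :=
  -H (Dop X Y X1) X2 - H X1 (Dop X Y X2)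

/-- The Tachibana operator `Q(A,H)` for a (0,4)-tensor `H`. -/
def Q4 (A : V → V → ℝ) (H : V → V → V → V → ℝ) :
    V → V → V → V → V → V → ℝ := dot4 (wedge A) H

/-- The Tachibana operator `Q(A,H)` for a (0,2)-tensor `H`. -/
def Q2 (A : V → V → ℝ) (H : V → V → ℝ) : V → V → V → V → ℝ := dot2 (wedge A) H

/-- Symmetric bilinear form (as a bare function). -/
def SymBilin (A : V → V → ℝ) : Prop :=
  (∀ x y, A x y = A y x) ∧ ∀ y, IsLinearMap ℝ fun x => A x y

/-- Nondegeneracy of a bilinear form. -/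
def Nondeg (g : V → V → ℝ) : Prop := ∀ x, (∀ y, g x y = 0) → x = 0

/-- Algebraic curvature tensor: multilinear, with the antisymmetries, pair symmetry
and first Bianchi identity of a Riemann curvature tensor. -/
def Curv (R : V → V → V → V → ℝ) : Prop :=
  (∀ y z w, IsLinearMap ℝ fun x => R x y z w) ∧
  (∀ x z w, IsLinearMap ℝ fun y => R x y z w) ∧
  (∀ x y w, IsLinearMap ℝ fun z => R x y z w) ∧
  (∀ x y z, IsLinearMap ℝ fun w => R x y z w) ∧
  (∀ x y z w, R x y z w = -R y x z w) ∧
  (∀ x y z w, R x y z w = -R x y w z) ∧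
  (∀ x y z w, R x y z w = R z w x y) ∧
  ∀ x y z w, R x y z w + R y z x w + R z x y w = 0

/-- The Gaussian-type tensor `G(x,y,z,w) = g(x,w) g(y,z) - g(x,z) g(y,w)`. -/
def Gten (g : V → V → ℝ) (x y z w : V) : ℝ := g x w * g y z - g x z * g y w

end WPS

theorem stmt1 {V : Type} [AddCommGroup V] [Module ℝ V] [FiniteDimensional ℝ V]
    (A E : V → V → ℝ) (hA : WPS.SymBilin A) (hE : WPS.SymBilin E) :
    (∀ x1 x2 x y : V, WPS.Q2 A E x1 x2 x y = 0) ↔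
      ∃ α β : ℝ, (α, β) ≠ (0, 0) ∧ ∀ x y : V, α * A x y + β * E x y = 0 := by
  have hAsym := hA.1
  have hEsym := hE.1
  -- linearity helper for E in the first slot
  have Elin : ∀ (a b : ℝ) (x y z : V), E (a • x - b • y) z = a * E x z - b * E y z := by
    intro a b x y z
    let f : V →ₗ[ℝ] ℝ := IsLinearMap.mk' (fun v => E v z) (hE.2 z)
    have : E (a • x - b • y) z = f (a • x - b • y) := rfl
    rw [this, map_sub, map_smul, map_smul]
    simp [f]
  -- expansion of Q2
  have Qexp : ∀ x1 x2 x y : V, WPS.Q2 A E x1 x2 x y =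
      A x x1 * E y x2 + A x x2 * E x1 y - A y x1 * E x x2 - A y x2 * E x1 x := by
    intro x1 x2 x y
    have h1 : E (WPS.wedge A x y x1) x2 = A y x1 * E x x2 - A x x1 * E y x2 :=
      Elin _ _ _ _ _
    have h2 : E x1 (WPS.wedge A x y x2) = A y x2 * E x1 x - A x x2 * E x1 y := by
      rw [hEsym x1 (WPS.wedge A x y x2)]
      rw [show E (WPS.wedge A x y x2) x1 = A y x2 * E x x1 - A x x2 * E y x1 from
        Elin _ _ _ _ _, hEsym x x1, hEsym y x1]
    show -E (WPS.wedge A x y x1) x2 - E x1 (WPS.wedge A x y x2) = _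
    rw [h1, h2]; ring
  constructor
  · intro hQ
    have key : ∀ x1 x2 x y : V,
        A x x1 * E y x2 + A x x2 * E x1 y - A y x1 * E x x2 - A y x2 * E x1 x = 0 := by
      intro x1 x2 x y
      rw [← Qexp]; exact hQ x1 x2 x y
    by_cases hA0 : ∀ x y : V, A x y = 0
    · exact ⟨1, 0, by simp, fun x y => by simp [hA0]⟩
    · push_neg at hA0
      obtain ⟨a, b, hab⟩ := hA0
      -- find u with A u u ≠ 0 (polarization)
      have hAadd : ∀ x y z : V, A (x + y) z = A x z + A y z := fun x y z =>
        (hA.2 z).map_add x y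
      have hu : ∃ u : V, A u u ≠ 0 := by
        by_contra hdiag
        push_neg at hdiag
        apply hab
        have h := hdiag (a + b)
        rw [hAadd, hAsym a (a + b), hAsym b (a + b), hAadd, hAadd] at h
        rw [hAsym b a] at h
        have := hdiag a; have := hdiag b
        nlinarith [hdiag a, hdiag b]
      obtain ⟨u, huu⟩ := hu
      set c : ℝ := E u u / A u u with hc
      have hcu : c * A u u = E u u := by rw [hc]; exact div_mul_cancel₀ _ huu
      -- step 1: E x u = c * A x u
      have step1 : ∀ x : V, E x u = c * A x u := by
        intro x
        have h := key u u x u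
        rw [hEsym u x] at h
        have : 2 * (A u u) * (E x u) = 2 * (E u u) * (A x u) := by linarith
        rw [← hcu] at this
        have h2 : A u u * (E x u - c * A x u) = 0 := by ring_nf; ring_nf at this; linarith
        rcases mul_eq_zero.mp h2 with h | h
        · exact absurd h huu
        · linarith
      -- step 2: E x1 x = c * A x1 x
      have step2 : ∀ x1 x : V, E x1 x = c * A x1 x := by
        intro x1 x
        have h := key x1 u x u
        rw [step1 x, step1 x1, ← hcu, hAsym u x1] at h
        have h2 : A u u * (E x1 x - c * A x1 x) = 0 := by
          rw [hAsym x1 x]; ring_nf; ring_nf at h; linarith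
        rcases mul_eq_zero.mp h2 with h | h
        · exact absurd h huu
        · linarith
      refine ⟨c, -1, by simp, fun x y => ?_⟩
      rw [step2 x y]; ring
  · rintro ⟨α, β, hne, h⟩ x1 x2 x y
    rw [Qexp]
    by_cases hβ : β = 0
    · have hα : α ≠ 0 := by
        intro hα; exact hne (by rw [hα, hβ])
      have hA0 : ∀ x y : V, A x y = 0 := by
        intro x y
        have := h x y
        rw [hβ] at this
        have : α * A x y = 0 := by linarith
        exact (mul_eq_zero.mp this).resolve_left hα
      simp [hA0]
    · have hE' : ∀ x y : V, E x y = -(α / β) * A x y := by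
        intro x y
        have := h x y
        field_simp
        linarith
      rw [hE' y x2, hE' x1 y, hE' x x2, hE' x1 x, hAsym x1 y, hAsym x1 x]
      ring
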